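/- arXiv:2110.07010 — 2 statements merged into one kernel-verified Lean document; each statement's English description precedes it below -/
import Mathlib

section
/- (Theorem 1, part 1, achievability direction.) Let K ∈ ℝ^{(T+1)p×(T+1)n} be block lower triangular, and define Φ_x := (I − Z(Â + B̂K))^{-1} ∈ ℝ^{(T+1)n×(T+1)n} and Φ_u := K·Φ_x ∈ ℝ^{(T+1)p×(T+1)n} (the inverse exists since Z(Â + B̂K) is nilpotent). Then Φ_x and Φ_u are block lower triangular and satisfy the affine constraint (I − ZÂ)Φ_x − ZB̂Φ_u = I. -/
/-- Block lower triangular: the `((t,i),(s,j))` entry vanishes whenever `s > t`. -/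
def BlockLT {a b T : ℕ}
    (M : Matrix (Fin (T + 1) × Fin a) (Fin (T + 1) × Fin b) ℝ) : Prop :=
  ∀ (t s : Fin (T + 1)) (i : Fin a) (j : Fin b), t < s → M (t, i) (s, j) = 0

/-- Strictly block lower triangular: the `((t,i),(s,j))` entry vanishes whenever `s ≥ t`. -/
def StrictBlockLT {a b T : ℕ}
    (M : Matrix (Fin (T + 1) × Fin a) (Fin (T + 1) × Fin b) ℝ) : Prop :=
  ∀ (t s : Fin (T + 1)) (i : Fin a) (j : Fin b), t ≤ s → M (t, i) (s, j) = 0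

/-- The block-downshift matrix `Z`: the `((t,i),(s,j))` entry is `1` iff `t = s + 1` and `i = j`. -/
def shiftZ (n T : ℕ) : Matrix (Fin (T + 1) × Fin n) (Fin (T + 1) × Fin n) ℝ :=
  fun r c => if (r.1 : ℕ) = (c.1 : ℕ) + 1 ∧ r.2 = c.2 then 1 else 0

/-- `Â = blkdiag(A, …, A)`. -/
def hatA {n : ℕ} (T : ℕ) (A : Matrix (Fin n) (Fin n) ℝ) :
    Matrix (Fin (T + 1) × Fin n) (Fin (T + 1) × Fin n) ℝ :=
  fun r c => if r.1 = c.1 then A r.2 c.2 else 0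

/-- `B̂ = blkdiag(B, …, B, 0)`. -/
def hatB {n p : ℕ} (T : ℕ) (B : Matrix (Fin n) (Fin p) ℝ) :
    Matrix (Fin (T + 1) × Fin n) (Fin (T + 1) × Fin p) ℝ :=
  fun r c => if r.1 = c.1 ∧ (c.1 : ℕ) < T then B r.2 c.2 else 0

lemma blockLT_mul {a b c T : ℕ}
    {M : Matrix (Fin (T + 1) × Fin a) (Fin (T + 1) × Fin b) ℝ}
    {P : Matrix (Fin (T + 1) × Fin b) (Fin (T + 1) × Fin c) ℝ}
    (hM : BlockLT M) (hP : BlockLT P) : BlockLT (M * P) := by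
  intro t s i j hts
  rw [Matrix.mul_apply]
  apply Finset.sum_eq_zero
  rintro ⟨u, k⟩ -
  rcases lt_or_ge t u with h | h
  · rw [hM t u i k h, zero_mul]
  · rw [hP u s k j (lt_of_le_of_lt h hts), mul_zero]

lemma strictBlockLT_mul_blockLT {a b c T : ℕ}
    {M : Matrix (Fin (T + 1) × Fin a) (Fin (T + 1) × Fin b) ℝ}
    {P : Matrix (Fin (T + 1) × Fin b) (Fin (T + 1) × Fin c) ℝ}
    (hM : StrictBlockLT M) (hP : BlockLT P) : StrictBlockLT (M * P) := by
  intro t s i j hts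
  rw [Matrix.mul_apply]
  apply Finset.sum_eq_zero
  rintro ⟨u, k⟩ -
  rcases le_or_gt t u with h | h
  · rw [hM t u i k h, zero_mul]
  · rw [hP u s k j (lt_of_lt_of_le h hts), mul_zero]

lemma blockLT_one {a T : ℕ} : BlockLT (1 : Matrix (Fin (T + 1) × Fin a) (Fin (T + 1) × Fin a) ℝ) := by
  intro t s i j hts
  apply Matrix.one_apply_ne
  intro h
  exact absurd (congrArg Prod.fst h) (ne_of_lt hts)

lemma blockLT_pow {a T : ℕ}
    {M : Matrix (Fin (T + 1) × Fin a) (Fin (T + 1) × Fin a) ℝ}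
    (hM : BlockLT M) (k : ℕ) : BlockLT (M ^ k) := by
  induction k with
  | zero => simpa using blockLT_one
  | succ k ih => rw [pow_succ]; exact blockLT_mul ih hM

lemma strictBlockLT_shiftZ {n T : ℕ} : StrictBlockLT (shiftZ n T) := by
  intro t s i j hts
  simp only [shiftZ, ite_eq_right_iff]
  rintro ⟨h, -⟩
  omega

lemma blockLT_hatA {n T : ℕ} (A : Matrix (Fin n) (Fin n) ℝ) : BlockLT (hatA T A) := by
  intro t s i j hts
  simp only [hatA, ite_eq_right_iff]
  intro h
  exact absurd h (ne_of_lt hts)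

lemma blockLT_hatB {n p T : ℕ} (B : Matrix (Fin n) (Fin p) ℝ) : BlockLT (hatB T B) := by
  intro t s i j hts
  simp only [hatB, ite_eq_right_iff]
  rintro ⟨h, -⟩
  exact absurd h (ne_of_lt hts)

lemma strictBlockLT_pow_zero {a T : ℕ}
    {M : Matrix (Fin (T + 1) × Fin a) (Fin (T + 1) × Fin a) ℝ}
    (hM : StrictBlockLT M) :
    ∀ (k : ℕ) (t s : Fin (T + 1)) (i j : Fin a), (t : ℕ) < (s : ℕ) + k →
      (M ^ k) (t, i) (s, j) = 0 := by
  intro k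
  induction k with
  | zero =>
    intro t s i j h
    simp only [Nat.add_zero] at h
    rw [pow_zero]
    apply Matrix.one_apply_ne
    intro hc
    rw [Prod.mk.injEq] at hc
    have := congrArg Fin.val hc.1
    omega
  | succ k ih =>
    intro t s i j h
    rw [pow_succ, Matrix.mul_apply]
    apply Finset.sum_eq_zero
    rintro ⟨u, l⟩ -
    rcases lt_or_ge (t : ℕ) ((u : ℕ) + k) with h' | h'
    · rw [ih t u i l h', zero_mul]
    · have hus : u ≤ s := by rw [Fin.le_def]; omega
      rw [hM u s l j hus, mul_zero]

lemma strictBlockLT_nilpotent {a T : ℕ}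
    {M : Matrix (Fin (T + 1) × Fin a) (Fin (T + 1) × Fin a) ℝ}
    (hM : StrictBlockLT M) : M ^ (T + 1) = 0 := by
  ext ⟨t, i⟩ ⟨s, j⟩
  rw [Matrix.zero_apply]
  apply strictBlockLT_pow_zero hM
  omega

/-- Theorem 1, part 1 (achievability). For block lower triangular `K`, the system responses
`Φ_x := (I − Z(Â + B̂K))⁻¹` and `Φ_u := K Φ_x` are block lower triangular and satisfy
the affine constraint `(I − ZÂ) Φ_x − Z B̂ Φ_u = I`. -/
theorem sls_achievability {n p T : ℕ}
    (A : Matrix (Fin n) (Fin n) ℝ) (B : Matrix (Fin n) (Fin p) ℝ)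
    (K : Matrix (Fin (T + 1) × Fin p) (Fin (T + 1) × Fin n) ℝ) (hK : BlockLT K) :
    BlockLT (1 - shiftZ n T * (hatA T A + hatB T B * K))⁻¹ ∧
    BlockLT (K * (1 - shiftZ n T * (hatA T A + hatB T B * K))⁻¹) ∧
    (1 - shiftZ n T * hatA T A) * (1 - shiftZ n T * (hatA T A + hatB T B * K))⁻¹ -
      shiftZ n T * hatB T B * (K * (1 - shiftZ n T * (hatA T A + hatB T B * K))⁻¹) = 1 := by
  set N := shiftZ n T * (hatA T A + hatB T B * K) with hNdef
  have hNblt : BlockLT (hatA T A + hatB T B * K) := by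
    intro t s i j hts
    have h1 := blockLT_hatA (T := T) A t s i j hts
    have h2 := blockLT_mul (blockLT_hatB (T := T) B) hK t s i j hts
    simp [Matrix.add_apply, h1, h2]
  have hN : StrictBlockLT N := strictBlockLT_mul_blockLT strictBlockLT_shiftZ hNblt
  have hnil : N ^ (T + 1) = 0 := strictBlockLT_nilpotent hN
  set S := ∑ k ∈ Finset.range (T + 1), N ^ k with hSdef
  have hS : (1 - N) * S = 1 := by
    have h := mul_geom_sum N (T + 1)
    rw [hnil] at h
    calc (1 - N) * S = -((N - 1) * S) := by rw [← neg_sub N 1, neg_mul]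
    _ = -(0 - 1) := by rw [hSdef, h]
    _ = 1 := by simp
  have hinv : (1 - N)⁻¹ = S := Matrix.inv_eq_right_inv hS
  have hSblt : BlockLT S := by
    intro t s i j hts
    rw [hSdef]
    rw [Matrix.sum_apply]
    exact Finset.sum_eq_zero fun k _ => blockLT_pow (fun t s i j h => hN t s i j h.le) k t s i j hts
  refine ⟨hinv ▸ hSblt, blockLT_mul hK (hinv ▸ hSblt), ?_⟩
  have key : (1 - shiftZ n T * hatA T A) * (1 - N)⁻¹ -
      shiftZ n T * hatB T B * (K * (1 - N)⁻¹) = (1 - N) * (1 - N)⁻¹ := by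
    rw [hNdef]
    simp only [Matrix.sub_mul, Matrix.add_mul, Matrix.mul_add, Matrix.one_mul, Matrix.mul_assoc]
    abel
  rw [key, hinv, hS]
end

section
/- Let Φ_x ∈ ℝ^{(T+1)n×(T+1)n} and Φ_u ∈ ℝ^{(T+1)p×(T+1)n} be block lower triangular matrices satisfying (I − ZÂ)Φ_x − ZB̂Φ_u = I. Then every diagonal block of Φ_x equals the identity: for all t ∈ {0,…,T} and i, j ∈ {1,…,n}, the ((t,i),(t,j)) entry of Φ_x equals 1 if i = j and 0 otherwise. In particular Φ_x is invertible. -/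
/-- If block lower triangular `Φ_x, Φ_u` satisfy `(I − ZÂ)Φ_x − ZB̂Φ_u = I`, then every
diagonal block of `Φ_x` equals the identity, and in particular `Φ_x` is invertible. -/
theorem sls_diag_blocks_id {n p T : ℕ}
    (A : Matrix (Fin n) (Fin n) ℝ) (B : Matrix (Fin n) (Fin p) ℝ)
    (Φx : Matrix (Fin (T + 1) × Fin n) (Fin (T + 1) × Fin n) ℝ)
    (Φu : Matrix (Fin (T + 1) × Fin p) (Fin (T + 1) × Fin n) ℝ)
    (hx : BlockLT Φx) (hu : BlockLT Φu)
    (haff : (1 - shiftZ n T * hatA T A) * Φx - shiftZ n T * hatB T B * Φu = 1) :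
    (∀ (t : Fin (T + 1)) (i j : Fin n),
      Φx (t, i) (t, j) = if i = j then 1 else 0) ∧
    IsUnit Φx := by

  -- Z * hatA has nonzero blocks only at (s+1, s)
  have hZA : ∀ (t s : Fin (T+1)) (i k : Fin n), (s:ℕ)+1 ≠ (t:ℕ) →
      (shiftZ n T * hatA T A) (t,i) (s,k) = 0 := by
    intro t s i k h
    rw [Matrix.mul_apply]
    apply Finset.sum_eq_zero
    rintro ⟨r, m⟩ -
    simp only [shiftZ, hatA]
    split_ifs with h1 h2
    · exfalso; subst h2; exact h h1.1.symm
    · simp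
    · simp
    · simp
  have hZB : ∀ (t s : Fin (T+1)) (i : Fin n) (k : Fin p), (s:ℕ)+1 ≠ (t:ℕ) →
      (shiftZ n T * hatB T B) (t,i) (s,k) = 0 := by
    intro t s i k h
    rw [Matrix.mul_apply]
    apply Finset.sum_eq_zero
    rintro ⟨r, m⟩ -
    simp only [shiftZ, hatB]
    split_ifs with h1 h2
    · exfalso; rw [h2.1] at h1; exact h h1.1.symm
    · simp
    · simp
    · simp
  have h1 : ∀ (t : Fin (T+1)) (i j : Fin n),
      (shiftZ n T * hatA T A * Φx) (t,i) (t,j) = 0 := by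
    intro t i j
    rw [Matrix.mul_apply]
    apply Finset.sum_eq_zero
    rintro ⟨s, k⟩ -
    by_cases hst : (s:ℕ)+1 = (t:ℕ)
    · have hlt : s < t := by rw [Fin.lt_def]; omega
      rw [hx s t k j hlt, mul_zero]
    · rw [hZA t s i k hst, zero_mul]
  have h2 : ∀ (t : Fin (T+1)) (i : Fin n) (j : Fin n),
      (shiftZ n T * hatB T B * Φu) (t,i) (t,j) = 0 := by
    intro t i j
    rw [Matrix.mul_apply]
    apply Finset.sum_eq_zero
    rintro ⟨s, k⟩ -
    by_cases hst : (s:ℕ)+1 = (t:ℕ)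
    · have hlt : s < t := by rw [Fin.lt_def]; omega
      rw [hu s t k j hlt, mul_zero]
    · rw [hZB t s i k hst, zero_mul]
  have hdiag : ∀ (t : Fin (T + 1)) (i j : Fin n),
      Φx (t, i) (t, j) = if i = j then 1 else 0 := by
    intro t i j
    have h := Matrix.ext_iff.mpr haff (t,i) (t,j)
    rw [Matrix.sub_apply, Matrix.sub_mul, Matrix.sub_apply, Matrix.one_mul,
      h1 t i j, h2 t i j, sub_zero, sub_zero, Matrix.one_apply] at h
    rw [h]
    by_cases hij : i = j
    · simp [hij]
    · simp [hij, Prod.ext_iff]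
  refine ⟨hdiag, ?_⟩
  have hbt : (Φx.transpose).BlockTriangular Prod.fst := by
    rintro ⟨s, j⟩ ⟨t, i⟩ h
    exact hx t s i j h
  have hsq : ∀ a : Fin (T+1), (Φx.transpose.toSquareBlock Prod.fst a) = 1 := by
    intro a
    ext ⟨⟨s, j⟩, hs⟩ ⟨⟨t, i⟩, ht⟩
    simp only [Matrix.toSquareBlock_def, Matrix.transpose_apply]
    have hs' : s = a := hs
    have ht' : t = a := ht
    have hst : t = s := ht'.trans hs'.symm
    subst hst
    simp only [Matrix.of_apply]
    rw [hdiag t i j, Matrix.one_apply]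
    by_cases hij : i = j
    · simp [hij]
    · simp [hij, Subtype.ext_iff, Prod.ext_iff, Ne.symm hij]
  have hdet : Φx.det ≠ 0 := by
    rw [← Matrix.det_transpose, hbt.det]
    have hone : ∀ a ∈ Finset.univ.image (Prod.fst : Fin (T+1) × Fin n → Fin (T+1)),
        (Φx.transpose.toSquareBlock Prod.fst a).det = 1 := by
      intro a _
      rw [hsq a, Matrix.det_one]
    rw [Finset.prod_eq_one hone]
    exact one_ne_zero
  exact (Matrix.isUnit_iff_isUnit_det Φx).mpr (isUnit_iff_ne_zero.mpr hdet)
end
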